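/- arXiv:2403.13848 — 3 statements merged into one kernel-verified Lean document; each statement's English description precedes it below -/
import Mathlib

section
/- Let β > 0, let Λ and n be integers with n ≥ Λ ≥ 1 and n ≥ 3, and define ξ(t) = e^{−βt}·g(max(Λ, n − t)). Set t* = n − (1 − β − √((1−β)² − 4β))/(2β) if (1−β)² − 4β ≥ 0, and t* = 0 otherwise (so t* ≥ 0 under the stated hypotheses). Then the smooth sensitivity of the Gini impurity at support size n with minimum support Λ, namely sup_{k ∈ ℕ} e^{−βk}·g(max(Λ, n − k)), equals max{ ξ(0), ξ(⌊t*⌋), ξ(⌈t*⌉), ξ(n − Λ) }. -/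
/-- Local sensitivity of the Gini impurity as a function of the support size. -/
noncomputable def g (x : ℝ) : ℝ := 1 - (x / (x + 1))^2 - (1 / (x + 1))^2

/-- `ξ(t) = e^{−βt}·g(max(Λ, n − t))`. -/
noncomputable def xi (β : ℝ) (Λ n : ℤ) (t : ℝ) : ℝ :=
  Real.exp (-β * t) * g (max (Λ : ℝ) ((n : ℝ) - t))

lemma g_eq (x : ℝ) (hx : x + 1 ≠ 0) : g x = 2*x/((x+1)^2) := by
  unfold g; field_simp; ring

lemma g_le_one (x : ℝ) : g x ≤ 1 := by
  unfold g
  nlinarith [sq_nonneg (x/(x+1)), sq_nonneg (1/(x+1))]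

lemma g_nonneg {x : ℝ} (hx : 0 ≤ x) : 0 ≤ g x := by
  rw [g_eq x (by positivity)]; positivity

/-- The auxiliary function `H(t) = e^{-βt}·2(N - t)/((N - t + 1)^2)`. -/
noncomputable def H (β N t : ℝ) : ℝ := Real.exp (-β*t) * (2*(N-t)/((N-t+1)^2))

lemma hasDerivAt_H (β N : ℝ) {t : ℝ} (ht : N - t + 1 ≠ 0) :
    HasDerivAt (H β N)
      (Real.exp (-β*t) * (-2*(β*(N-t)^2 + (β-1)*(N-t) + 1)) / ((N-t+1)^3)) t := by
  have e : HasDerivAt (fun t : ℝ => Real.exp (-β*t)) (Real.exp (-β*t) * (-β * 1)) t :=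
    ((hasDerivAt_id t).const_mul (-β)).exp
  have num : HasDerivAt (fun t : ℝ => 2*(N-t)) (2 * (0 - 1)) t :=
    ((hasDerivAt_const t N).sub (hasDerivAt_id t)).const_mul 2
  have den : HasDerivAt (fun t : ℝ => (N-t+1)^2) (2 * (N-t+1)^1 * (0 - 1 + 0)) t :=
    (((hasDerivAt_const t N).sub (hasDerivAt_id t)).add (hasDerivAt_const t 1)).pow 2
  have p := num.div den (pow_ne_zero 2 ht)
  have := e.mul p
  convert this using 1
  · rfl
  · rfl
  · rfl
  · simp only [Pi.div_apply]
    field_simp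
    ring

lemma mono_H (β N a b : ℝ) (hb : b ≤ N)
    (hq : ∀ t ∈ Set.Icc a b, β*(N-t)^2 + (β-1)*(N-t) + 1 ≤ 0) :
    MonotoneOn (H β N) (Set.Icc a b) := by
  have hne : ∀ t ∈ Set.Icc a b, N - t + 1 ≠ 0 := fun t ht => by
    have h2 := ht.2; have : 0 < N - t + 1 := by linarith
    exact ne_of_gt this
  apply monotoneOn_of_hasDerivWithinAt_nonneg (convex_Icc a b)
    (f' := fun t => Real.exp (-β*t) * (-2*(β*(N-t)^2 + (β-1)*(N-t) + 1)) / ((N-t+1)^3))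
  · intro x hx
    exact (hasDerivAt_H β N (hne x hx)).continuousAt.continuousWithinAt
  · intro x hx
    have hx' : x ∈ Set.Icc a b := interior_subset hx
    exact (hasDerivAt_H β N (hne x hx')).hasDerivWithinAt
  · intro x hx
    have hx' : x ∈ Set.Icc a b := interior_subset hx
    have h1 := hq x hx'
    have h2 : (0:ℝ) < N - x + 1 := by have := hx'.2; linarith
    have h3 : (0:ℝ) ≤ Real.exp (-β*x) * (-2*(β*(N-x)^2 + (β-1)*(N-x) + 1)) := by
      apply mul_nonneg (Real.exp_pos _).le; linarith
    positivity

lemma anti_H (β N a b : ℝ) (hb : b ≤ N)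
    (hq : ∀ t ∈ Set.Icc a b, 0 ≤ β*(N-t)^2 + (β-1)*(N-t) + 1) :
    AntitoneOn (H β N) (Set.Icc a b) := by
  have hne : ∀ t ∈ Set.Icc a b, N - t + 1 ≠ 0 := fun t ht => by
    have h2 := ht.2; have : 0 < N - t + 1 := by linarith
    exact ne_of_gt this
  apply antitoneOn_of_hasDerivWithinAt_nonpos (convex_Icc a b)
    (f' := fun t => Real.exp (-β*t) * (-2*(β*(N-t)^2 + (β-1)*(N-t) + 1)) / ((N-t+1)^3))
  · intro x hx
    exact (hasDerivAt_H β N (hne x hx)).continuousAt.continuousWithinAt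
  · intro x hx
    have hx' : x ∈ Set.Icc a b := interior_subset hx
    exact (hasDerivAt_H β N (hne x hx')).hasDerivWithinAt
  · intro x hx
    have hx' : x ∈ Set.Icc a b := interior_subset hx
    have h1 := hq x hx'
    have h2 : (0:ℝ) < N - x + 1 := by have := hx'.2; linarith
    apply div_nonpos_of_nonpos_of_nonneg
    · apply mul_nonpos_of_nonneg_of_nonpos (Real.exp_pos _).le; linarith
    · positivity

/-- The smaller critical point `u₋` is at most 3. -/
lemma um_le_three {β : ℝ} (hβ : 0 < β) (hD : 0 ≤ (1-β)^2 - 4*β) :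
    (1 - β - Real.sqrt ((1-β)^2 - 4*β)) / (2*β) ≤ 3 := by
  have hs0 := Real.sqrt_nonneg ((1-β)^2 - 4*β)
  have hs2 : (Real.sqrt ((1-β)^2 - 4*β))^2 = (1-β)^2-4*β := Real.sq_sqrt hD
  rw [div_le_iff₀ (by positivity)]
  rcases le_total (1 - 7*β) 0 with h | h
  · linarith
  · nlinarith [hs2, hs0, h, sq_nonneg (Real.sqrt ((1-β)^2 - 4*β) - (1-7*β)),
      sq_nonneg (Real.sqrt ((1-β)^2 - 4*β) + (1-7*β))]

/-- The smaller critical point `u₋` is at least 1 when `3β ≤ 1`. -/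
lemma one_le_um {β : ℝ} (hβ : 0 < β) (hD : 0 ≤ (1-β)^2 - 4*β) (hβ3 : 3*β ≤ 1) :
    1 ≤ (1 - β - Real.sqrt ((1-β)^2 - 4*β)) / (2*β) := by
  have hs0 := Real.sqrt_nonneg ((1-β)^2 - 4*β)
  have hs2 : (Real.sqrt ((1-β)^2 - 4*β))^2 = (1-β)^2-4*β := Real.sq_sqrt hD
  rw [le_div_iff₀ (by positivity)]
  -- need: 2β ≤ 1 - β - s, i.e. s ≤ 1 - 3β
  nlinarith [hs2, hs0, sq_nonneg (Real.sqrt ((1-β)^2 - 4*β) - (1-3*β)),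
    sq_nonneg (Real.sqrt ((1-β)^2 - 4*β) + (1-3*β))]

set_option maxHeartbeats 2000000 in
theorem smooth_sensitivity_gini (β : ℝ) (hβ : 0 < β) (Λ n : ℤ)
    (hΛ : 1 ≤ Λ) (hΛn : Λ ≤ n) (hn3 : 3 ≤ n)
    (tstar : ℝ)
    (htstar : tstar = if (1 - β)^2 - 4*β ≥ 0
      then (n : ℝ) - (1 - β - Real.sqrt ((1 - β)^2 - 4*β)) / (2*β) else 0) :
    (⨆ k : ℕ, Real.exp (-β * (k : ℝ)) * g (max (Λ : ℝ) ((n : ℝ) - (k : ℝ)))) =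
      max (max (xi β Λ n 0) (xi β Λ n (⌊tstar⌋ : ℝ)))
          (max (xi β Λ n (⌈tstar⌉ : ℝ)) (xi β Λ n ((n : ℝ) - (Λ : ℝ)))) := by
  have hN3 : (3:ℝ) ≤ (n:ℝ) := by exact_mod_cast hn3
  have hΛ1 : (1:ℝ) ≤ (Λ:ℝ) := by exact_mod_cast hΛ
  have hΛN : (Λ:ℝ) ≤ (n:ℝ) := by exact_mod_cast hΛn
  set F : ℕ → ℝ := fun k => Real.exp (-β * (k:ℝ)) * g (max (Λ : ℝ) ((n : ℝ) - (k : ℝ))) with hF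
  set M : ℝ := max (max (xi β Λ n 0) (xi β Λ n (⌊tstar⌋ : ℝ)))
          (max (xi β Λ n (⌈tstar⌉ : ℝ)) (xi β Λ n ((n : ℝ) - (Λ : ℝ)))) with hM
  have hxiF : ∀ k : ℕ, xi β Λ n (k:ℝ) = F k := fun k => rfl
  have hbdd : BddAbove (Set.range F) := by
    refine ⟨1, ?_⟩; rintro x ⟨k, rfl⟩
    have h0 : (0:ℝ) ≤ (k:ℝ) := Nat.cast_nonneg k
    have h1 : Real.exp (-β * (k:ℝ)) ≤ 1 := by
      rw [Real.exp_le_one_iff]; nlinarith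
    have h2 : 0 ≤ g (max (Λ:ℝ) ((n:ℝ)-(k:ℝ))) :=
      g_nonneg (le_trans (by linarith) (le_max_left _ _))
    have h3 := g_le_one (max (Λ:ℝ) ((n:ℝ)-(k:ℝ)))
    have h4 := (Real.exp_pos (-β * (k:ℝ))).le
    simp only [hF]
    nlinarith
  have hxiH : ∀ t : ℝ, t ≤ (n:ℝ) - (Λ:ℝ) → xi β Λ n t = H β (n:ℝ) t := by
    intro t ht
    have h1 : (Λ:ℝ) ≤ (n:ℝ) - t := by linarith
    have h2 : ((n:ℝ) - t) + 1 ≠ 0 := ne_of_gt (by linarith)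
    unfold xi H
    rw [max_eq_right h1, g_eq _ h2]
  have hxiL : ∀ t : ℝ, (n:ℝ) - (Λ:ℝ) ≤ t → xi β Λ n t = Real.exp (-β*t) * g (Λ:ℝ) := by
    intro t ht
    unfold xi
    rw [max_eq_left (by linarith)]
  have hgL : 0 ≤ g (Λ:ℝ) := g_nonneg (by linarith)
  -- tstar is nonnegative
  have hts0 : 0 ≤ tstar := by
    rw [htstar]; split_ifs with hD
    · have := um_le_three hβ hD; linarith
    · exact le_rfl
  -- the key pointwise bound
  have key : ∀ k : ℕ, F k ≤ M := by
    intro k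
    have hk0 : (0:ℝ) ≤ (k:ℝ) := Nat.cast_nonneg k
    rcases le_total ((n:ℝ) - (Λ:ℝ)) (k:ℝ) with hk | hk
    · -- the Λ branch
      have e1 : F k = Real.exp (-β*(k:ℝ)) * g (Λ:ℝ) := by
        rw [← hxiF]; exact hxiL _ hk
      have e2 : xi β Λ n ((n:ℝ)-(Λ:ℝ)) = Real.exp (-β*((n:ℝ)-(Λ:ℝ))) * g (Λ:ℝ) :=
        hxiL _ le_rfl
      have h3 : Real.exp (-β*(k:ℝ)) ≤ Real.exp (-β*((n:ℝ)-(Λ:ℝ))) := by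
        apply Real.exp_le_exp.mpr; nlinarith
      have h4 : F k ≤ xi β Λ n ((n:ℝ)-(Λ:ℝ)) := by
        rw [e1, e2]; exact mul_le_mul_of_nonneg_right h3 hgL
      exact le_trans h4 (le_trans (le_max_right _ _) (le_max_right _ _))
    · -- the H branch
      have ek : F k = H β (n:ℝ) (k:ℝ) := by rw [← hxiF]; exact hxiH _ hk
      have hxi0 : xi β Λ n 0 = H β (n:ℝ) 0 := hxiH 0 (by linarith)
      have byzero : (∀ u : ℝ, 0 ≤ u → 0 ≤ β*u^2+(β-1)*u+1) → F k ≤ M := by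
        intro hq
        have hanti := anti_H β (n:ℝ) 0 ((n:ℝ)-(Λ:ℝ)) (by linarith)
          (fun t ht => hq _ (by have := ht.2; linarith))
        have h5 : H β (n:ℝ) (k:ℝ) ≤ H β (n:ℝ) 0 :=
          hanti ⟨le_rfl, by linarith⟩ ⟨hk0, hk⟩ hk0
        rw [ek]
        exact le_trans (le_trans h5 hxi0.symm.le)
          (le_trans (le_max_left _ _) (le_max_left _ _))
      by_cases hD : (1 - β)^2 - 4*β ≥ 0
      · by_cases hb3 : 3*β ≤ 1
        · -- the full unimodal analysis
          set s : ℝ := Real.sqrt ((1-β)^2 - 4*β) with hs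
          have hs0 : 0 ≤ s := Real.sqrt_nonneg _
          have hs2 : s^2 = (1-β)^2 - 4*β := Real.sq_sqrt hD
          set um : ℝ := (1 - β - s)/(2*β) with hum
          set up : ℝ := (1 - β + s)/(2*β) with hup
          have h2b : (0:ℝ) < 2*β := by linarith
          have hum1 : 1 ≤ um := one_le_um hβ hD hb3
          have hum3 : um ≤ 3 := um_le_three hβ hD
          have humup : um ≤ up := by
            rw [hum, hup]
            exact (div_le_div_iff_of_pos_right h2b).mpr (by linarith)
          have hts : tstar = (n:ℝ) - um := by rw [htstar, if_pos hD]
          -- sign conditions for q(u) = βu² + (β−1)u + 1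
          have hq_lo : ∀ u : ℝ, u ≤ um → 0 ≤ β*u^2+(β-1)*u+1 := by
            intro u hu
            have h1 : u * (2*β) ≤ 1 - β - s := (le_div_iff₀ h2b).mp hu
            have hA : 0 ≤ 1-β-2*β*u - s := by linarith
            have hB : 0 ≤ 1-β-2*β*u + s := by linarith
            have hP : 0 ≤ 4*β*(β*u^2+(β-1)*u+1) := by
              nlinarith [mul_nonneg hA hB, hs2]
            nlinarith [hP]
          have hq_mid : ∀ u : ℝ, um ≤ u → u ≤ up → β*u^2+(β-1)*u+1 ≤ 0 := by
            intro u hu1 hu2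
            have h1 : 1 - β - s ≤ u * (2*β) := (div_le_iff₀ h2b).mp hu1
            have h2 : u * (2*β) ≤ 1 - β + s := (le_div_iff₀ h2b).mp hu2
            have hA : 0 ≤ s - (1-β-2*β*u) := by linarith
            have hB : 0 ≤ s + (1-β-2*β*u) := by linarith
            have hP : 4*β*(β*u^2+(β-1)*u+1) ≤ 0 := by
              nlinarith [mul_nonneg hA hB, hs2]
            nlinarith [hP]
          have hq_hi : ∀ u : ℝ, up ≤ u → 0 ≤ β*u^2+(β-1)*u+1 := by
            intro u hu
            have h1 : 1 - β + s ≤ u * (2*β) := (div_le_iff₀ h2b).mp hu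
            have hA : 0 ≤ -(1-β-2*β*u) - s := by linarith
            have hB : 0 ≤ -(1-β-2*β*u) + s := by linarith
            have hP : 0 ≤ 4*β*(β*u^2+(β-1)*u+1) := by
              nlinarith [mul_nonneg hA hB, hs2]
            nlinarith [hP]
          rcases le_total tstar (k:ℝ) with hc | hc
          · -- decreasing side: compare with ⌈tstar⌉
            have hceil : (⌈tstar⌉:ℝ) ≤ (k:ℝ) := by
              have : ⌈tstar⌉ ≤ (k:ℤ) := Int.ceil_le.mpr (by exact_mod_cast hc)
              exact_mod_cast this
            have hceil2 : tstar ≤ (⌈tstar⌉:ℝ) := Int.le_ceil _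
            have hanti := anti_H β (n:ℝ) tstar ((n:ℝ)-(Λ:ℝ)) (by linarith)
              (fun t ht => hq_lo _ (by have := ht.1; rw [hts] at this; linarith))
            have h5 : H β (n:ℝ) (k:ℝ) ≤ H β (n:ℝ) (⌈tstar⌉:ℝ) :=
              hanti ⟨hceil2, by linarith⟩ ⟨hc, hk⟩ hceil
            have h6 : xi β Λ n (⌈tstar⌉:ℝ) = H β (n:ℝ) (⌈tstar⌉:ℝ) :=
              hxiH _ (by linarith)
            rw [ek]
            exact le_trans (le_trans h5 h6.symm.le)
              (le_trans (le_max_left _ _) (le_max_right _ _))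
          · -- k ≤ tstar
            rcases le_total ((k:ℝ)) ((n:ℝ) - up) with hc2 | hc2
            · -- far decreasing side: compare with 0
              have hanti := anti_H β (n:ℝ) 0 ((n:ℝ) - up) (by linarith)
                (fun t ht => hq_hi _ (by have := ht.2; linarith))
              have h5 : H β (n:ℝ) (k:ℝ) ≤ H β (n:ℝ) 0 :=
                hanti ⟨le_rfl, by linarith⟩ ⟨hk0, hc2⟩ hk0
              rw [ek]
              exact le_trans (le_trans h5 hxi0.symm.le)
                (le_trans (le_max_left _ _) (le_max_left _ _))
            · -- increasing side
              have hmono := mono_H β (n:ℝ) ((n:ℝ) - up) tstar (by rw [hts]; linarith)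
                (fun t ht => hq_mid _ (by have := ht.2; rw [hts] at this; linarith)
                  (by have := ht.1; linarith))
              rcases le_total tstar ((n:ℝ) - (Λ:ℝ)) with hc3 | hc3
              · -- compare with ⌊tstar⌋
                have hfl : (k:ℝ) ≤ (⌊tstar⌋:ℝ) := by
                  have : (k:ℤ) ≤ ⌊tstar⌋ := Int.le_floor.mpr (by exact_mod_cast hc)
                  exact_mod_cast this
                have hfl2 : (⌊tstar⌋:ℝ) ≤ tstar := Int.floor_le _
                have h5 : H β (n:ℝ) (k:ℝ) ≤ H β (n:ℝ) (⌊tstar⌋:ℝ) :=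
                  hmono ⟨hc2, hc⟩ ⟨by linarith, hfl2⟩ hfl
                have h6 : xi β Λ n (⌊tstar⌋:ℝ) = H β (n:ℝ) (⌊tstar⌋:ℝ) :=
                  hxiH _ (by linarith)
                rw [ek]
                exact le_trans (le_trans h5 h6.symm.le)
                  (le_trans (le_max_right _ _) (le_max_left _ _))
              · -- compare with n - Λ
                have h5 : H β (n:ℝ) (k:ℝ) ≤ H β (n:ℝ) ((n:ℝ)-(Λ:ℝ)) :=
                  hmono ⟨hc2, hc⟩ ⟨by linarith, hc3⟩ hk
                have h6 : xi β Λ n ((n:ℝ)-(Λ:ℝ)) = H β (n:ℝ) ((n:ℝ)-(Λ:ℝ)) :=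
                  hxiH _ le_rfl
                rw [ek]
                exact le_trans (le_trans h5 h6.symm.le)
                  (le_trans (le_max_right _ _) (le_max_right _ _))
        · -- 3β > 1 : q(u) > 0 for u ≥ 0
          apply byzero
          intro u hu
          push_neg at hb3
          have h3b : (0:ℝ) ≤ 3*β-1 := by linarith
          linarith [sq_nonneg (u-1), mul_nonneg h3b (sq_nonneg u), mul_nonneg h3b hu]
      · -- discriminant negative: q(u) > 0 always
        apply byzero
        intro u hu
        push_neg at hD
        have hP : 0 < 4*β*(β*u^2+(β-1)*u+1) := by
          nlinarith [sq_nonneg (2*β*u + β - 1)]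
        nlinarith [hP]
  -- assemble
  have emb : ∀ j : ℤ, 0 ≤ j → xi β Λ n (j:ℝ) ≤ ⨆ k, F k := by
    intro j hj
    have hcast : ((j.toNat : ℕ) : ℝ) = (j:ℝ) := by exact_mod_cast Int.toNat_of_nonneg hj
    have : xi β Λ n (j:ℝ) = F j.toNat := by rw [← hcast]; rfl
    rw [this]; exact le_ciSup hbdd _
  apply le_antisymm
  · exact ciSup_le key
  · rw [hM]
    apply max_le (max_le ?_ ?_) (max_le ?_ ?_)
    · have := emb 0 le_rfl; simpa using this
    · exact emb ⌊tstar⌋ (Int.floor_nonneg.mpr hts0)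
    · exact emb ⌈tstar⌉ (Int.ceil_nonneg hts0)
    · have := emb (n-Λ) (by omega)
      push_cast at this
      exact this
end

section
/- For every dataset D and every β > 0, the smooth sensitivity satisfies S*_{f,β}(D) = sup_{k ∈ ℕ} e^{−βk} · T_k(D), where T_k(D) is the local sensitivity of f at distance k from D. -/
/-- Distance between datasets: `d(D,D') = ∑_a |D(a) − D'(a)|`. -/
noncomputable def ddist {X : Type*} [DecidableEq X] (D D' : X →₀ ℕ) : ℕ :=
  (D.support ∪ D'.support).sum fun a => ((D a : ℤ) - (D' a : ℤ)).natAbs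

/-- Local sensitivity of `f` at `D`. -/
noncomputable def LS {X : Type*} [DecidableEq X] (f : (X →₀ ℕ) → ℝ) (D : X →₀ ℕ) : ℝ :=
  sSup {v | ∃ D', ddist D D' = 1 ∧ v = |f D - f D'|}

/-- Local sensitivity of `f` at distance `k` from `D`. -/
noncomputable def Tk {X : Type*} [DecidableEq X] (f : (X →₀ ℕ) → ℝ) (k : ℕ) (D : X →₀ ℕ) : ℝ :=
  sSup {v | ∃ D', ddist D D' ≤ k ∧ v = LS f D'}

/-- Smooth sensitivity of `f` at `D` with parameter `β`. -/
noncomputable def Sstar {X : Type*} [DecidableEq X] (f : (X →₀ ℕ) → ℝ) (β : ℝ)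
    (D : X →₀ ℕ) : ℝ :=
  sSup {v | ∃ D', v = LS f D' * Real.exp (-β * (ddist D D' : ℝ))}

lemma ddist_self {X : Type*} [DecidableEq X] (D : X →₀ ℕ) : ddist D D = 0 := by
  simp [ddist]

lemma exists_ddist_one {X : Type*} [DecidableEq X] [Nonempty X] (D : X →₀ ℕ) :
    ∃ D', ddist D D' = 1 := by
  obtain ⟨a⟩ := ‹Nonempty X›
  classical
  set E : X →₀ ℕ := D + Finsupp.single a 1 with hE
  refine ⟨E, ?_⟩
  have hEx : ∀ x, E x = D x + Finsupp.single a 1 x := by intro x; simp [hE]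
  have hmem : a ∈ D.support ∪ E.support := by
    simp [Finsupp.mem_support_iff, hEx]
  unfold ddist
  have : ∀ x ∈ D.support ∪ E.support,
      ((D x : ℤ) - (E x : ℤ)).natAbs = if x = a then 1 else 0 := by
    intro x _
    rcases eq_or_ne x a with rfl | h
    · simp [hEx]
    · simp [hEx, Finsupp.single_apply_eq_zero.mpr, h]
  rw [Finset.sum_congr rfl this, Finset.sum_ite_eq' _ a, if_pos hmem]

theorem smooth_sensitivity_iterative {X : Type*} [DecidableEq X] [Countable X] [Nonempty X]
    (f : (X →₀ ℕ) → ℝ) (hf : ∃ B : ℝ, ∀ D, |f D| ≤ B)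
    (β : ℝ) (hβ : 0 < β) (D : X →₀ ℕ) :
    Sstar f β D = ⨆ k : ℕ, Real.exp (-β * (k : ℝ)) * Tk f k D := by
  obtain ⟨B, hB⟩ := hf
  -- LS bounds
  have hLS_bdd : ∀ E : X →₀ ℕ, BddAbove {v | ∃ D', ddist E D' = 1 ∧ v = |f E - f D'|} := by
    intro E
    refine ⟨2 * B, ?_⟩
    rintro v ⟨D', -, rfl⟩
    calc |f E - f D'| ≤ |f E| + |f D'| := abs_sub _ _
      _ ≤ B + B := add_le_add (hB E) (hB D')
      _ = 2 * B := by ring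
  have hLS_le : ∀ E : X →₀ ℕ, LS f E ≤ 2 * B := by
    intro E
    apply csSup_le
    · obtain ⟨D', hD'⟩ := exists_ddist_one E
      exact ⟨|f E - f D'|, D', hD', rfl⟩
    · rintro v ⟨D', -, rfl⟩
      calc |f E - f D'| ≤ |f E| + |f D'| := abs_sub _ _
        _ ≤ B + B := add_le_add (hB E) (hB D')
        _ = 2 * B := by ring
  have hLS_nn : ∀ E : X →₀ ℕ, 0 ≤ LS f E := by
    intro E
    obtain ⟨D', hD'⟩ := exists_ddist_one E
    exact le_trans (abs_nonneg (f E - f D'))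
      (le_csSup (hLS_bdd E) ⟨D', hD', rfl⟩)
  -- Tk set facts
  have hTk_bdd : ∀ k : ℕ, BddAbove {v | ∃ D', ddist D D' ≤ k ∧ v = LS f D'} := by
    intro k
    exact ⟨2 * B, by rintro v ⟨D', -, rfl⟩; exact hLS_le D'⟩
  have hTk_ne : ∀ k : ℕ, ({v | ∃ D', ddist D D' ≤ k ∧ v = LS f D'} : Set ℝ).Nonempty := by
    intro k
    exact ⟨LS f D, D, by simp [ddist_self], rfl⟩
  have hTk_le : ∀ k : ℕ, Tk f k D ≤ 2 * B := fun k =>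
    csSup_le (hTk_ne k) (by rintro v ⟨D', -, rfl⟩; exact hLS_le D')
  have hTk_nn : ∀ k : ℕ, 0 ≤ Tk f k D := fun k =>
    le_trans (hLS_nn D) (le_csSup (hTk_bdd k) ⟨D, by simp [ddist_self], rfl⟩)
  -- Sstar set facts
  have hS_bdd : BddAbove {v | ∃ D', v = LS f D' * Real.exp (-β * (ddist D D' : ℝ))} := by
    refine ⟨2 * B, ?_⟩
    rintro v ⟨D', rfl⟩
    calc LS f D' * Real.exp (-β * (ddist D D' : ℝ))
        ≤ (2 * B) * 1 := by
          apply mul_le_mul (hLS_le D') ?_ (Real.exp_nonneg _) ?_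
          · exact Real.exp_le_one_iff.mpr
              (by nlinarith [(Nat.cast_nonneg (ddist D D') : (0:ℝ) ≤ _), hβ.le])
          · linarith [hLS_nn D', hLS_le D']
      _ = 2 * B := by ring
  -- Range bddAbove
  have hrange_bdd : BddAbove (Set.range fun k : ℕ => Real.exp (-β * (k : ℝ)) * Tk f k D) := by
    refine ⟨2 * B, ?_⟩
    rintro v ⟨k, rfl⟩
    calc Real.exp (-β * (k : ℝ)) * Tk f k D ≤ 1 * (2 * B) := by
          apply mul_le_mul ?_ (hTk_le k) (hTk_nn k) zero_le_one
          exact Real.exp_le_one_iff.mpr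
            (by nlinarith [(Nat.cast_nonneg k : (0:ℝ) ≤ _), hβ.le])
      _ = 2 * B := by ring
  apply le_antisymm
  · -- Sstar ≤ iSup
    refine csSup_le ⟨LS f D * Real.exp (-β * (ddist D D : ℝ)), D, rfl⟩ ?_
    rintro v ⟨D', rfl⟩
    have h1 : LS f D' ≤ Tk f (ddist D D') D :=
      le_csSup (hTk_bdd _) ⟨D', le_refl _, rfl⟩
    calc LS f D' * Real.exp (-β * (ddist D D' : ℝ))
        ≤ Tk f (ddist D D') D * Real.exp (-β * (ddist D D' : ℝ)) :=
          mul_le_mul_of_nonneg_right h1 (Real.exp_nonneg _)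
      _ = Real.exp (-β * ((ddist D D' : ℕ) : ℝ)) * Tk f (ddist D D') D := by ring
      _ ≤ _ := le_ciSup hrange_bdd (ddist D D')
  · -- iSup ≤ Sstar
    apply ciSup_le
    intro k
    have key : Tk f k D ≤ Real.exp (β * (k : ℝ)) * Sstar f β D := by
      apply csSup_le (hTk_ne k)
      rintro v ⟨D', hd, rfl⟩
      have h1 : LS f D' * Real.exp (-β * (ddist D D' : ℝ)) ≤ Sstar f β D :=
        le_csSup hS_bdd ⟨D', rfl⟩
      have h2 : Real.exp (β * (ddist D D' : ℝ)) ≤ Real.exp (β * (k : ℝ)) := by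
        apply Real.exp_le_exp.mpr
        have : (ddist D D' : ℝ) ≤ (k : ℝ) := by exact_mod_cast hd
        nlinarith
      have h3 : 0 ≤ LS f D' * Real.exp (-β * (ddist D D' : ℝ)) :=
        mul_nonneg (hLS_nn D') (Real.exp_nonneg _)
      calc LS f D' = Real.exp (β * (ddist D D' : ℝ)) *
            (LS f D' * Real.exp (-β * (ddist D D' : ℝ))) := by
            rw [mul_comm (Real.exp _) _, mul_assoc, ← Real.exp_add]
            simp
        _ ≤ Real.exp (β * (k : ℝ)) * Sstar f β D :=
            mul_le_mul h2 h1 h3 (Real.exp_nonneg _)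
    calc Real.exp (-β * (k : ℝ)) * Tk f k D
        ≤ Real.exp (-β * (k : ℝ)) * (Real.exp (β * (k : ℝ)) * Sstar f β D) :=
          mul_le_mul_of_nonneg_left key (Real.exp_nonneg _)
      _ = Sstar f β D := by
          rw [← mul_assoc, ← Real.exp_add]
          simp
end

section
/- Let n ≥ 1 be an integer, let 0 < β < 3 − 2√2, set Δ = (1 − β)² − 4β, y₁ = (1 − β + √Δ)/(2β), y₂ = (1 − β − √Δ)/(2β), t₁ = n − y₁ and t₂ = n − y₂. If 0 ≤ t₁ ≤ t₂ < n − 1, then sup_{k ∈ ℕ} e^{−βk}·g(max(1, n − k)) = max( g(n), e^{−β⌊t₂⌋}·g(n − ⌊t₂⌋), e^{−β⌈t₂⌉}·g(n − ⌈t₂⌉) ). -/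
lemma gini_hasDerivAt (β c t : ℝ) (ht : c - t + 1 ≠ 0) :
    HasDerivAt (fun t => Real.exp (-β*t) * (2*(c-t) / ((c-t+1)^2)))
      (Real.exp (-β*t) * (-2 * (β*(c-t)^2 - (1-β)*(c-t) + 1)) / ((c-t+1)^3)) t := by
  have h1 : HasDerivAt (fun t : ℝ => Real.exp (-β*t)) (Real.exp (-β*t) * (-β)) t := by
    simpa using ((hasDerivAt_id t).const_mul (-β)).exp
  have h2 : HasDerivAt (fun t : ℝ => 2*(c-t)) (-2) t := by
    simpa using ((hasDerivAt_const t c).sub (hasDerivAt_id t)).const_mul (2:ℝ)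
  have h3 : HasDerivAt (fun t : ℝ => (c-t+1)^2) (2*(c-t+1)*(-1)) t := by
    have : HasDerivAt (fun t : ℝ => c-t+1) (-1) t := by
      simpa using ((hasDerivAt_const t c).sub (hasDerivAt_id t)).add_const (1:ℝ)
    simpa using this.fun_pow 2
  have h4 := h2.fun_div h3 (pow_ne_zero 2 ht)
  have h5 := h1.fun_mul h4
  refine h5.congr_deriv ?_
  field_simp
  ring

lemma gini_anti (β c a b : ℝ)
    (hpos : ∀ t ∈ Set.Icc a b, 0 < c - t + 1)
    (hsgn : ∀ t ∈ Set.Icc a b, 0 ≤ β*(c-t)^2 - (1-β)*(c-t) + 1) :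
    AntitoneOn (fun t => Real.exp (-β*t) * (2*(c-t) / ((c-t+1)^2))) (Set.Icc a b) := by
  have hderiv : ∀ t ∈ Set.Icc a b,
      HasDerivAt (fun t => Real.exp (-β*t) * (2*(c-t) / ((c-t+1)^2)))
        (Real.exp (-β*t) * (-2 * (β*(c-t)^2 - (1-β)*(c-t) + 1)) / ((c-t+1)^3)) t :=
    fun t htm => gini_hasDerivAt β c t (hpos t htm).ne'
  apply antitoneOn_of_deriv_nonpos (convex_Icc a b)
  · exact fun t htm => ((hderiv t htm).differentiableAt).continuousAt.continuousWithinAt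
  · intro t htm
    exact ((hderiv t (Set.mem_Icc_of_Ioo (by rwa [interior_Icc] at htm))).differentiableAt).differentiableWithinAt
  · intro t htm
    rw [interior_Icc] at htm
    have htm' := Set.mem_Icc_of_Ioo htm
    rw [(hderiv t htm').deriv]
    have h1 := hpos t htm'
    have h2 := hsgn t htm'
    have h3 : (0:ℝ) < Real.exp (-β*t) := Real.exp_pos _
    have h4 : (0:ℝ) < (c-t+1)^3 := by positivity
    apply div_nonpos_of_nonpos_of_nonneg _ h4.le
    nlinarith

lemma gini_mono (β c a b : ℝ)
    (hpos : ∀ t ∈ Set.Icc a b, 0 < c - t + 1)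
    (hsgn : ∀ t ∈ Set.Icc a b, β*(c-t)^2 - (1-β)*(c-t) + 1 ≤ 0) :
    MonotoneOn (fun t => Real.exp (-β*t) * (2*(c-t) / ((c-t+1)^2))) (Set.Icc a b) := by
  have hderiv : ∀ t ∈ Set.Icc a b,
      HasDerivAt (fun t => Real.exp (-β*t) * (2*(c-t) / ((c-t+1)^2)))
        (Real.exp (-β*t) * (-2 * (β*(c-t)^2 - (1-β)*(c-t) + 1)) / ((c-t+1)^3)) t :=
    fun t htm => gini_hasDerivAt β c t (hpos t htm).ne'
  apply monotoneOn_of_deriv_nonneg (convex_Icc a b)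
  · exact fun t htm => ((hderiv t htm).differentiableAt).continuousAt.continuousWithinAt
  · intro t htm
    exact ((hderiv t (Set.mem_Icc_of_Ioo (by rwa [interior_Icc] at htm))).differentiableAt).differentiableWithinAt
  · intro t htm
    rw [interior_Icc] at htm
    have htm' := Set.mem_Icc_of_Ioo htm
    rw [(hderiv t htm').deriv]
    have h1 := hpos t htm'
    have h2 := hsgn t htm'
    have h3 : (0:ℝ) < Real.exp (-β*t) := Real.exp_pos _
    have h4 : (0:ℝ) < (c-t+1)^3 := by positivity
    apply div_nonneg _ h4.le
    nlinarith

set_option maxHeartbeats 1200000 in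
theorem smooth_sensitivity_small_beta_t1_nonneg (n : ℤ) (hn : 1 ≤ n) (β : ℝ)
    (hβ0 : 0 < β) (hβ1 : β < 3 - 2 * Real.sqrt 2)
    (Δ y₁ y₂ t₁ t₂ : ℝ)
    (hΔ : Δ = (1 - β)^2 - 4 * β)
    (hy₁ : y₁ = (1 - β + Real.sqrt Δ) / (2 * β))
    (hy₂ : y₂ = (1 - β - Real.sqrt Δ) / (2 * β))
    (ht₁ : t₁ = (n : ℝ) - y₁) (ht₂ : t₂ = (n : ℝ) - y₂)
    (ht₁0 : 0 ≤ t₁) (ht₁₂ : t₁ ≤ t₂) (ht₂lt : t₂ < (n : ℝ) - 1) :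
    (⨆ k : ℕ, Real.exp (-β * (k : ℝ)) * g (max (1 : ℝ) ((n : ℝ) - (k : ℝ)))) =
      max (g (n : ℝ))
        (max (Real.exp (-β * (⌊t₂⌋ : ℝ)) * g ((n : ℝ) - (⌊t₂⌋ : ℝ)))
             (Real.exp (-β * (⌈t₂⌉ : ℝ)) * g ((n : ℝ) - (⌈t₂⌉ : ℝ)))) := by
  have hc1 : (1:ℝ) ≤ (n:ℝ) := by exact_mod_cast hn
  have hβ := hβ0.ne'
  -- basic facts
  have hΔpos : 0 < Δ := by
    have h2 : Real.sqrt 2 ^ 2 = 2 := Real.sq_sqrt (by norm_num)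
    have h2' : (0:ℝ) ≤ Real.sqrt 2 := Real.sqrt_nonneg 2
    rw [hΔ]; nlinarith
  have hs : Real.sqrt Δ ^ 2 = Δ := Real.sq_sqrt hΔpos.le
  have hs0 : (0:ℝ) ≤ Real.sqrt Δ := Real.sqrt_nonneg _
  have hy2gt1 : 1 < y₂ := by rw [ht₂] at ht₂lt; linarith
  have hy12 : y₂ ≤ y₁ := by rw [ht₁, ht₂] at ht₁₂; linarith
  have hy1le : y₁ ≤ (n:ℝ) := by rw [ht₁] at ht₁0; linarith
  have hct1 : (n:ℝ) - t₁ = y₁ := by rw [ht₁]; ring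
  have hct2 : (n:ℝ) - t₂ = y₂ := by rw [ht₂]; ring
  have ht₂0 : 0 ≤ t₂ := le_trans ht₁0 ht₁₂
  -- quadratic factorization
  have hsum : y₁ + y₂ = (1-β)/β := by rw [hy₁, hy₂]; field_simp; ring
  have hprod : y₁ * y₂ = 1/β := by
    rw [hy₁, hy₂]
    field_simp
    nlinarith [hs, hΔ]
  have hfac : ∀ y : ℝ, β*y^2 - (1-β)*y + 1 = β*(y-y₁)*(y-y₂) := by
    intro y
    have e1 : β*(y-y₁)*(y-y₂) = β*y^2 - β*(y₁+y₂)*y + β*(y₁*y₂) := by ring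
    rw [e1, hsum, hprod]
    field_simp
  -- g rewriting
  have hg : ∀ x : ℝ, x + 1 ≠ 0 → g x = 2*x/((x+1)^2) := by
    intro x hx
    unfold g
    field_simp
    ring
  set H : ℝ → ℝ := fun t => Real.exp (-β*t) * (2*((n:ℝ)-t) / (((n:ℝ)-t+1)^2)) with hH
  -- monotonicity pieces
  have A1 : AntitoneOn H (Set.Icc 0 t₁) := by
    apply gini_anti
    · intro t ht; simp only [Set.mem_Icc] at ht; linarith
    · intro t ht; simp only [Set.mem_Icc] at ht
      rw [hfac ((n:ℝ)-t)]
      have h1 : y₁ ≤ (n:ℝ) - t := by linarith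
      have h2 : y₂ ≤ (n:ℝ) - t := by linarith
      have := mul_nonneg (mul_nonneg hβ0.le (by linarith : (0:ℝ) ≤ (n:ℝ)-t-y₁)) (by linarith : (0:ℝ) ≤ (n:ℝ)-t-y₂)
      nlinarith
  have M1 : MonotoneOn H (Set.Icc t₁ t₂) := by
    apply gini_mono
    · intro t ht; simp only [Set.mem_Icc] at ht; linarith
    · intro t ht; simp only [Set.mem_Icc] at ht
      rw [hfac ((n:ℝ)-t)]
      have h1 : (n:ℝ) - t ≤ y₁ := by linarith
      have h2 : y₂ ≤ (n:ℝ) - t := by linarith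
      have := mul_nonneg (by linarith : (0:ℝ) ≤ y₁ - ((n:ℝ)-t)) (by linarith : (0:ℝ) ≤ (n:ℝ)-t-y₂)
      nlinarith
  have A2 : AntitoneOn H (Set.Icc t₂ ((n:ℝ)-1)) := by
    apply gini_anti
    · intro t ht; simp only [Set.mem_Icc] at ht; linarith
    · intro t ht; simp only [Set.mem_Icc] at ht
      rw [hfac ((n:ℝ)-t)]
      have h1 : (n:ℝ) - t ≤ y₂ := by linarith
      have := mul_nonneg (by linarith : (0:ℝ) ≤ y₁ - ((n:ℝ)-t)) (by linarith : (0:ℝ) ≤ y₂ - ((n:ℝ)-t))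
      nlinarith
  -- rewriting the summand as H on [0, n-1]
  have hfh : ∀ r : ℝ, r ≤ (n:ℝ) - 1 →
      Real.exp (-β*r) * g (max 1 ((n:ℝ) - r)) = H r := by
    intro r h1
    have hm : max (1:ℝ) ((n:ℝ)-r) = (n:ℝ)-r := max_eq_right (by linarith)
    rw [hm, hg ((n:ℝ)-r) (by intro hx; nlinarith)]
  have hfh' : ∀ r : ℝ, r ≤ (n:ℝ) - 1 →
      Real.exp (-β*r) * g ((n:ℝ) - r) = H r := by
    intro r h1
    rw [hg ((n:ℝ)-r) (by intro hx; nlinarith)]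
  -- floor/ceil facts
  have hfint : (0:ℤ) ≤ ⌊t₂⌋ := Int.floor_nonneg.mpr ht₂0
  have hf0 : (0:ℝ) ≤ (⌊t₂⌋:ℝ) := by exact_mod_cast hfint
  have hfle : (⌊t₂⌋:ℝ) ≤ t₂ := Int.floor_le t₂
  have hcge : t₂ ≤ (⌈t₂⌉:ℝ) := Int.le_ceil t₂
  have hcle : (⌈t₂⌉:ℝ) ≤ (n:ℝ) - 1 := by
    have h1 : ⌈t₂⌉ ≤ n - 1 := Int.ceil_le.mpr (by push_cast; linarith)
    have h2 : ((⌈t₂⌉:ℤ):ℝ) ≤ ((n-1:ℤ):ℝ) := by exact_mod_cast h1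
    push_cast at h2
    linarith
  have hfle' : (⌊t₂⌋:ℝ) ≤ (n:ℝ) - 1 := by linarith
  -- values of RHS as H
  have hv0 : g (n:ℝ) = H 0 := by
    have := hfh 0 (by linarith)
    simp only [max_eq_right hc1, mul_zero, neg_zero, Real.exp_zero, one_mul, sub_zero] at this ⊢
    rw [← this]
  have hvf : Real.exp (-β * (⌊t₂⌋:ℝ)) * g ((n:ℝ) - (⌊t₂⌋:ℝ)) = H (⌊t₂⌋:ℝ) :=
    hfh' _ hfle'
  have hvc : Real.exp (-β * (⌈t₂⌉:ℝ)) * g ((n:ℝ) - (⌈t₂⌉:ℝ)) = H (⌈t₂⌉:ℝ) :=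
    hfh' _ hcle
  set M : ℝ := max (g (n:ℝ))
      (max (Real.exp (-β * (⌊t₂⌋:ℝ)) * g ((n:ℝ) - (⌊t₂⌋:ℝ)))
           (Real.exp (-β * (⌈t₂⌉:ℝ)) * g ((n:ℝ) - (⌈t₂⌉:ℝ)))) with hM
  -- the key bound
  have key : ∀ k : ℕ, Real.exp (-β * (k:ℝ)) * g (max 1 ((n:ℝ) - (k:ℝ))) ≤ M := by
    intro k
    rcases le_or_gt ((k:ℝ)) t₁ with hk1 | hk1
    · -- decreasing region before t₁
      have hkle : (k:ℝ) ≤ (n:ℝ) - 1 := by linarith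
      rw [hfh (k:ℝ) hkle]
      have : H (k:ℝ) ≤ H 0 := A1 (Set.mem_Icc.mpr ⟨le_refl 0, ht₁0⟩)
        (Set.mem_Icc.mpr ⟨Nat.cast_nonneg k, hk1⟩) (Nat.cast_nonneg k)
      calc H (k:ℝ) ≤ H 0 := this
        _ = g (n:ℝ) := hv0.symm
        _ ≤ M := le_max_left _ _
    · rcases le_or_gt ((k:ℝ)) t₂ with hk2 | hk2
      · -- increasing region: go up to floor
        have hkfl : (k:ℝ) ≤ (⌊t₂⌋:ℝ) := by
          have : (k:ℤ) ≤ ⌊t₂⌋ := Int.le_floor.mpr (by push_cast; exact hk2)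
          exact_mod_cast this
        have hkle : (k:ℝ) ≤ (n:ℝ) - 1 := by linarith
        rw [hfh (k:ℝ) hkle]
        have : H (k:ℝ) ≤ H (⌊t₂⌋:ℝ) := M1
          (Set.mem_Icc.mpr ⟨hk1.le, hk2⟩)
          (Set.mem_Icc.mpr ⟨by linarith, hfle⟩) hkfl
        calc H (k:ℝ) ≤ H (⌊t₂⌋:ℝ) := this
          _ = Real.exp (-β * (⌊t₂⌋:ℝ)) * g ((n:ℝ) - (⌊t₂⌋:ℝ)) := hvf.symm
          _ ≤ M := le_trans (le_max_left _ _) (le_max_right _ _)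
      · -- decreasing region after t₂
        have hkc : (⌈t₂⌉:ℝ) ≤ (k:ℝ) := by
          have : ⌈t₂⌉ ≤ (k:ℤ) := Int.ceil_le.mpr (by push_cast; exact hk2.le)
          exact_mod_cast this
        have hend : H (k:ℝ) ≤ H (⌈t₂⌉:ℝ) ∨ True := Or.inr trivial
        rcases le_or_gt ((k:ℝ)) ((n:ℝ)-1) with hk3 | hk3
        · rw [hfh (k:ℝ) hk3]
          have : H (⌈t₂⌉:ℝ) ≥ H (k:ℝ) := A2
            (Set.mem_Icc.mpr ⟨hcge, hcle⟩)
            (Set.mem_Icc.mpr ⟨hk2.le, hk3⟩) hkc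
          calc H (k:ℝ) ≤ H (⌈t₂⌉:ℝ) := this
            _ = Real.exp (-β * (⌈t₂⌉:ℝ)) * g ((n:ℝ) - (⌈t₂⌉:ℝ)) := hvc.symm
            _ ≤ M := le_trans (le_max_right _ _) (le_max_right _ _)
        · -- tail: support size clamped at 1
          have hm : max (1:ℝ) ((n:ℝ)-(k:ℝ)) = 1 := max_eq_left (by linarith)
          rw [hm]
          have hg1 : g 1 = 1/2 := by unfold g; norm_num
          have hHn1 : H ((n:ℝ)-1) = Real.exp (-β*((n:ℝ)-1)) * (1/2) := by
            rw [hH]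
            simp only []
            norm_num
          have hexp : Real.exp (-β*(k:ℝ)) ≤ Real.exp (-β*((n:ℝ)-1)) := by
            apply Real.exp_le_exp.mpr
            nlinarith
          have hA : H ((n:ℝ)-1) ≤ H (⌈t₂⌉:ℝ) := A2
            (Set.mem_Icc.mpr ⟨hcge, hcle⟩)
            (Set.mem_Icc.mpr ⟨by linarith, le_refl _⟩) hcle
          calc Real.exp (-β*(k:ℝ)) * g 1 ≤ Real.exp (-β*((n:ℝ)-1)) * (1/2) := by
                rw [hg1]; apply mul_le_mul_of_nonneg_right hexp; norm_num
            _ = H ((n:ℝ)-1) := hHn1.symm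
            _ ≤ H (⌈t₂⌉:ℝ) := hA
            _ = Real.exp (-β * (⌈t₂⌉:ℝ)) * g ((n:ℝ) - (⌈t₂⌉:ℝ)) := hvc.symm
            _ ≤ M := le_trans (le_max_right _ _) (le_max_right _ _)
  have hbdd : BddAbove (Set.range fun k : ℕ =>
      Real.exp (-β * (k:ℝ)) * g (max 1 ((n:ℝ) - (k:ℝ)))) := by
    refine ⟨M, ?_⟩
    rintro x ⟨k, rfl⟩
    exact key k
  apply le_antisymm
  · exact ciSup_le key
  · apply max_le
    · have h0 : g (n:ℝ) = Real.exp (-β * ((0:ℕ):ℝ)) * g (max 1 ((n:ℝ) - ((0:ℕ):ℝ))) := by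
        simp [max_eq_right hc1]
      rw [h0]
      exact le_ciSup hbdd 0
    · apply max_le
      · set k₀ : ℕ := ⌊t₂⌋.toNat with hk₀
        have hcast : ((k₀:ℕ):ℝ) = (⌊t₂⌋:ℝ) := by
          rw [hk₀]
          exact_mod_cast Int.toNat_of_nonneg hfint
        have heq : Real.exp (-β * (⌊t₂⌋:ℝ)) * g ((n:ℝ) - (⌊t₂⌋:ℝ))
            = Real.exp (-β * (k₀:ℝ)) * g (max 1 ((n:ℝ) - (k₀:ℝ))) := by
          rw [hcast]
          have : max (1:ℝ) ((n:ℝ) - (⌊t₂⌋:ℝ)) = (n:ℝ) - (⌊t₂⌋:ℝ) :=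
            max_eq_right (by linarith)
          rw [this]
        rw [heq]
        exact le_ciSup hbdd k₀
      · set k₁ : ℕ := ⌈t₂⌉.toNat with hk₁
        have hcint : (0:ℤ) ≤ ⌈t₂⌉ := Int.ceil_nonneg ht₂0
        have hcast : ((k₁:ℕ):ℝ) = (⌈t₂⌉:ℝ) := by
          rw [hk₁]
          exact_mod_cast Int.toNat_of_nonneg hcint
        have heq : Real.exp (-β * (⌈t₂⌉:ℝ)) * g ((n:ℝ) - (⌈t₂⌉:ℝ))
            = Real.exp (-β * (k₁:ℝ)) * g (max 1 ((n:ℝ) - (k₁:ℝ))) := by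
          rw [hcast]
          have : max (1:ℝ) ((n:ℝ) - (⌈t₂⌉:ℝ)) = (n:ℝ) - (⌈t₂⌉:ℝ) :=
            max_eq_right (by linarith)
          rw [this]
        rw [heq]
        exact le_ciSup hbdd k₁
end
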